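/- Let L > 0, N ≥ 1, t_k ∈ (0, √3/L), B > 0, and define α_k = (B/2)max(2, t_kL+1), σ_1 = (B/4)min(−Lt_1²+3t_1, −L²t_1³+3t_1), σ_k = (B/4)min(−Lt_k²+3t_k+t_{k−1}, −L²t_k³+3t_k+t_{k−1}) for 2 ≤ k ≤ N, and σ_{N+1} = (B/(4L))(2+Lt_N). Then all multipliers α_k, α_k − B, σ_k are nonnegative, and σ_k + (2α_k − B)(Lt_k²/4) − Bt_k/2 = (B/4)(t_k + t_{k−1}) for 2 ≤ k ≤ N. Moreover Σ_{k=1}^{N+1} σ_k = B·(Σ_{k=1}^N min(−L²t_k³+4t_k, −Lt_k²+4t_k) + 2/L)/4. -/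

import Mathlib

lemma stmt_16_aux (L B x : ℝ) (hL : L ≠ 0) :
    B / (4 * L) * (2 + L * x) = B / 4 * (2 / L) + B / 4 * x := by
  field_simp

theorem stmt_16 (L B : ℝ) (hL : 0 < L) (hB : 0 < B) (N : ℕ) (hN : 1 ≤ N)
    (t : ℕ → ℝ) (ht : ∀ k, 1 ≤ k → k ≤ N → t k ∈ Set.Ioo 0 (Real.sqrt 3 / L))
    (α σ : ℕ → ℝ)
    (hα : ∀ k, 1 ≤ k → k ≤ N → α k = B / 2 * max 2 (t k * L + 1))
    (hσ1 : σ 1 = B / 4 * min (-L * t 1 ^ 2 + 3 * t 1) (-L ^ 2 * t 1 ^ 3 + 3 * t 1))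
    (hσk : ∀ k, 2 ≤ k → k ≤ N →
      σ k = B / 4 * min (-L * t k ^ 2 + 3 * t k + t (k - 1))
        (-L ^ 2 * t k ^ 3 + 3 * t k + t (k - 1)))
    (hσN1 : σ (N + 1) = B / (4 * L) * (2 + L * t N)) :
    (∀ k, 1 ≤ k → k ≤ N → 0 ≤ α k ∧ 0 ≤ α k - B) ∧
    (∀ k, 1 ≤ k → k ≤ N + 1 → 0 ≤ σ k) ∧
    (∀ k, 2 ≤ k → k ≤ N →
      σ k + (2 * α k - B) * (L * t k ^ 2 / 4) - B * t k / 2 = B / 4 * (t k + t (k - 1))) ∧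
    ∑ k ∈ Finset.Icc 1 (N + 1), σ k =
      B * (∑ k ∈ Finset.Icc 1 N,
        min (-L ^ 2 * t k ^ 3 + 4 * t k) (-L * t k ^ 2 + 4 * t k) + 2 / L) / 4 := by
  have hs3 := Real.sq_sqrt (by norm_num : (0:ℝ) ≤ 3)
  have hs3n := Real.sqrt_nonneg 3
  have sqrt3_lt : Real.sqrt 3 < 3 := by nlinarith
  have key : ∀ k, 1 ≤ k → k ≤ N → 0 < t k ∧ L * t k < 3 ∧ (L * t k) ^ 2 < 3 := by
    intro k h1 h2
    obtain ⟨h0, hlt⟩ := ht k h1 h2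
    rw [lt_div_iff₀ hL] at hlt
    have hlt' : L * t k < Real.sqrt 3 := by linarith [mul_comm (t k) L]
    refine ⟨h0, hlt'.trans sqrt3_lt, ?_⟩
    nlinarith [mul_nonneg hL.le h0.le]
  have mnn : ∀ k, 1 ≤ k → k ≤ N →
      0 ≤ min (-L * t k ^ 2 + 3 * t k) (-L ^ 2 * t k ^ 3 + 3 * t k) := by
    intro k h1 h2
    obtain ⟨h0, hl, hl2⟩ := key k h1 h2
    refine le_min (by nlinarith) (by nlinarith)
  refine ⟨?_, ?_, ?_, ?_⟩
  · intro k h1 h2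
    rw [hα k h1 h2]
    have h2' : (2:ℝ) ≤ max 2 (t k * L + 1) := le_max_left _ _
    constructor <;> nlinarith
  · intro k h1 h2
    rcases eq_or_lt_of_le h2 with rfl | hlt
    · rw [hσN1]
      obtain ⟨h0, _, _⟩ := key N hN le_rfl
      have hq : 0 < B / (4 * L) := by positivity
      have hp : 0 < 2 + L * t N := by nlinarith [mul_pos hL h0]
      exact (mul_pos hq hp).le
    · have h2N : k ≤ N := by omega
      rcases eq_or_lt_of_le h1 with rfl' | hk2
      · subst rfl'
        rw [hσ1]
        exact mul_nonneg (by positivity) (mnn 1 le_rfl h2N)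
      · have hk2' : 2 ≤ k := hk2
        rw [hσk k hk2' h2N]
        have h0' := (key (k-1) (by omega) (by omega)).1
        have hm := mnn k (by omega) h2N
        have : min (-L * t k ^ 2 + 3 * t k + t (k - 1))
            (-L ^ 2 * t k ^ 3 + 3 * t k + t (k - 1))
            = min (-L * t k ^ 2 + 3 * t k) (-L ^ 2 * t k ^ 3 + 3 * t k) + t (k-1) := by
          rw [← min_add_add_right]
        rw [this]
        nlinarith
  · intro k h2 hN'
    rw [hσk k h2 hN', hα k (by omega) hN']
    obtain ⟨h0, hl, hl2⟩ := key k (by omega) hN'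
    rcases le_total (L * t k) 1 with hc | hc
    · rw [max_eq_left (by nlinarith), min_eq_left (by nlinarith)]
      ring
    · rw [max_eq_right (by nlinarith), min_eq_right (by nlinarith)]
      ring
  · -- sum identity
    have hrhs : ∀ k ∈ Finset.Icc 1 N,
        min (-L ^ 2 * t k ^ 3 + 4 * t k) (-L * t k ^ 2 + 4 * t k)
        = min (-L * t k ^ 2 + 3 * t k) (-L ^ 2 * t k ^ 3 + 3 * t k) + t k := by
      intro k _
      have : min (-L ^ 2 * t k ^ 3 + 4 * t k) (-L * t k ^ 2 + 4 * t k)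
          = min ((-L * t k ^ 2 + 3 * t k) + t k) ((-L ^ 2 * t k ^ 3 + 3 * t k) + t k) := by
        rw [min_comm]; congr 1 <;> ring
      rw [this, min_add_add_right]
    rw [Finset.sum_congr rfl hrhs, Finset.sum_add_distrib]
    have h1N : Finset.Icc 1 N = insert 1 (Finset.Icc 2 N) := by
      ext x; simp only [Finset.mem_Icc, Finset.mem_insert]; omega
    have hNsplit : Finset.Icc 1 N = insert N (Finset.Icc 1 (N-1)) := by
      ext x; simp only [Finset.mem_Icc, Finset.mem_insert]; omega
    rw [Finset.sum_Icc_succ_top (by omega : 1 ≤ N+1), hσN1]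
    nth_rewrite 1 [h1N]
    rw [Finset.sum_insert (by simp), hσ1,
      Finset.sum_congr rfl (fun k hk => hσk k (Finset.mem_Icc.mp hk).1 (Finset.mem_Icc.mp hk).2)]
    have hshift : ∀ k ∈ Finset.Icc 2 N,
        B / 4 * min (-L * t k ^ 2 + 3 * t k + t (k - 1))
          (-L ^ 2 * t k ^ 3 + 3 * t k + t (k - 1))
        = B / 4 * min (-L * t k ^ 2 + 3 * t k) (-L ^ 2 * t k ^ 3 + 3 * t k)
          + B / 4 * t (k - 1) := by
      intro k _
      rw [min_add_add_right]; ring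
    rw [Finset.sum_congr rfl hshift, Finset.sum_add_distrib]
    have reidx : ∑ k ∈ Finset.Icc 2 N, B / 4 * t (k - 1)
        = ∑ k ∈ Finset.Icc 1 (N-1), B / 4 * t k := by
      rw [← Finset.Ico_add_one_right_eq_Icc, ← Finset.Ico_add_one_right_eq_Icc, Finset.sum_Ico_eq_sum_range,
        Finset.sum_Ico_eq_sum_range]
      apply Finset.sum_congr
      · congr 1
      · intro i _
        have h : 2 + i - 1 = 1 + i := by omega
        rw [h]
    rw [reidx]
    have hmin_split : ∑ x ∈ Finset.Icc 1 N,
        min (-L * t x ^ 2 + 3 * t x) (-L ^ 2 * t x ^ 3 + 3 * t x)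
        = min (-L * t 1 ^ 2 + 3 * t 1) (-L ^ 2 * t 1 ^ 3 + 3 * t 1)
          + ∑ x ∈ Finset.Icc 2 N, min (-L * t x ^ 2 + 3 * t x) (-L ^ 2 * t x ^ 3 + 3 * t x) := by
      rw [h1N, Finset.sum_insert (by simp)]
    have ht_split : ∑ x ∈ Finset.Icc 1 N, t x = ∑ x ∈ Finset.Icc 1 (N-1), t x + t N := by
      rw [hNsplit, Finset.sum_insert (by simp; omega)]; ring
    rw [hmin_split, ht_split, ← Finset.mul_sum (Finset.Icc 2 N), ← Finset.mul_sum (Finset.Icc 1 (N-1))]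
    have hLne : L ≠ 0 := ne_of_gt hL
    rw [stmt_16_aux L B (t N) hLne]; ring
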